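/- The membership problem for a fixed deterministic top view weak k-pebble automaton is solvable in time O(n^k) on data words of length n. -/

import Mathlib

/-! Core definitions: weak pebble automata over data words. -/

inductive PAct where
  | stay | right | place | lift
deriving DecidableEq

inductive Tape (Sigma : Type) where
  | leftMarker | rightMarker | letter (σ : Sigma)

/-- The label of position `p` of the padded input `⊲ w ⊳` (positions `1..n` carry
the letters of `w`, position `0` the left-end marker, positions `> n` the right-end marker). -/
def labelAt {Sigma D : Type} (w : List (Sigma × D)) (p : ℕ) : Tape Sigma :=
  if p = 0 then Tape.leftMarker
  else
    match w[p - 1]? with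
    | some x => Tape.letter x.1
    | none => Tape.rightMarker

/-- The data value of position `p` (markers carry no data value). -/
def dataAt {Sigma D : Type} (w : List (Sigma × D)) (p : ℕ) : Option D :=
  if p = 0 then none else (w[p - 1]?).map Prod.snd

/-- A (one-way, alternating) weak `k`-pebble automaton over the alphabet `Sigma`.
Pebbles are numbered from `k` down to `1`; pebble `i` being the head pebble.
A transition `(i, σ, V, q) → (p, act)` is represented by `δ i σ V q p act`. -/
structure WeakPA (Sigma : Type) (k : ℕ) where
  Q : Type
  finQ : Fintype Q
  q0 : Q
  F : Set Q
  U : Set Q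
  δ : ℕ → Tape Sigma → Set ℕ → Q → Q → PAct → Prop

namespace WeakPA

variable {Sigma D : Type} {k : ℕ}

/-- A configuration `(i, q, θ)`: head pebble `i`, current state `q`,
pebble assignment `θ` (meaningful on pebbles `i,…,k`). -/
abbrev Config (A : WeakPA Sigma k) : Type := ℕ × A.Q × (ℕ → ℕ)

/-- The set `V = { l : l > i, l ≤ k, pebble l sees the same data value as pebble i }`. -/
def eqSet (w : List (Sigma × D)) (k i : ℕ) (θ : ℕ → ℕ) : Set ℕ :=
  {l | i < l ∧ l ≤ k ∧ (dataAt w (θ l)).isSome ∧ dataAt w (θ l) = dataAt w (θ i)}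

/-- One step of the weak `k`-PA `A` on the input word `w`. -/
def step (A : WeakPA Sigma k) (w : List (Sigma × D)) :
    A.Config → A.Config → Prop := fun c c' =>
  1 ≤ c.1 ∧ c.1 ≤ k ∧
  (∀ j, j ≠ c.1 → j ≠ c.1 - 1 → c'.2.2 j = c.2.2 j) ∧
  ∃ act : PAct,
    A.δ c.1 (labelAt w (c.2.2 c.1)) (eqSet w k c.1 c.2.2) c.2.1 c'.2.1 act ∧
    match act with
    | PAct.stay =>
        c'.1 = c.1 ∧ c'.2.2 c.1 = c.2.2 c.1 ∧ c'.2.2 (c.1 - 1) = c.2.2 (c.1 - 1)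
    | PAct.right =>
        c'.1 = c.1 ∧ c'.2.2 c.1 = c.2.2 c.1 + 1 ∧ c'.2.2 (c.1 - 1) = c.2.2 (c.1 - 1)
    | PAct.lift =>
        c'.1 = c.1 + 1 ∧ c'.2.2 c.1 = c.2.2 c.1 ∧ c'.2.2 (c.1 - 1) = c.2.2 (c.1 - 1)
    | PAct.place =>
        2 ≤ c.1 ∧ c'.1 = c.1 - 1 ∧ c'.2.2 c.1 = c.2.2 c.1 ∧ c'.2.2 (c.1 - 1) = c.2.2 c.1

/-- The alternating "leads to acceptance" semantics. -/
inductive Leads (A : WeakPA Sigma k) (w : List (Sigma × D)) : A.Config → Prop where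
  | final {c : A.Config} : c.2.1 ∈ A.F → Leads A w c
  | univ {c : A.Config} : c.2.1 ∈ A.U →
      (∀ c', A.step w c c' → Leads A w c') → Leads A w c
  | exist {c c' : A.Config} : c.2.1 ∉ A.F → c.2.1 ∉ A.U →
      A.step w c c' → Leads A w c' → Leads A w c

/-- The initial configuration: pebble `k` on the left-end marker in the initial state. -/
def initConfig (A : WeakPA Sigma k) : A.Config := (k, A.q0, fun _ => 0)

def Accepts (A : WeakPA Sigma k) (w : List (Sigma × D)) : Prop :=
  A.Leads w A.initConfig

/-- The data language of `A` over the data domain `D`. -/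
def Lang (A : WeakPA Sigma k) (D : Type) : Set (List (Sigma × D)) :=
  {w | A.Accepts w}

/-- A weak PA is nondeterministic if it has no universal states. -/
def Nondeterministic (A : WeakPA Sigma k) : Prop := A.U = ∅

/-- A weak PA is deterministic (over data domain `D`) if it is nondeterministic and
exactly one transition applies to each configuration. -/
def Deterministic (A : WeakPA Sigma k) (D : Type) : Prop :=
  A.U = ∅ ∧ ∀ (w : List (Sigma × D)) (c : A.Config),
    1 ≤ c.1 → c.1 ≤ k → ∃! c', A.step w c c'

/-- Top view weak PA: the head pebble `i` may test data equality only with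
pebble `i+1`, i.e. every transition has `V = ∅` or `V = {i+1}`. -/
def TopView (A : WeakPA Sigma k) : Prop :=
  ∀ i t V q q' a, A.δ i t V q q' a → V = ∅ ∨ V = {i + 1}

/-- The states `U` of universal states are required to be disjoint from `F`. -/
def WellFormed (A : WeakPA Sigma k) : Prop := ∀ q ∈ A.U, q ∉ A.F

end WeakPA

/-- `IterStep A w m c c'`: configuration `c'` is reached from `c` in exactly `m` steps. -/
def WeakPA.IterStep {Sigma D : Type} {k : ℕ} (A : WeakPA Sigma k)
    (w : List (Sigma × D)) : ℕ → A.Config → A.Config → Prop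
  | 0, c, c' => c' = c
  | m + 1, c, c' => ∃ c'', A.step w c c'' ∧ A.IterStep w m c'' c'

namespace Det18

open WeakPA

variable {Sigma : Type} {k : ℕ}

lemma labelAt_congr {D : Type} (w : List (Sigma × D)) {p q : ℕ}
    (h : min p (w.length + 1) = min q (w.length + 1)) :
    labelAt w p = labelAt w q := by
  have norm : ∀ r : ℕ, labelAt w r = labelAt w (min r (w.length + 1)) := by
    intro r
    rcases le_or_gt r (w.length + 1) with hr | hr
    · rw [min_eq_left hr]
    · have h1 : min r (w.length + 1) = w.length + 1 := by omega
      rw [h1]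
      unfold labelAt
      rw [if_neg (by omega : ¬ r = 0), if_neg (by omega : ¬ w.length + 1 = 0)]
      rw [List.getElem?_eq_none_iff.mpr (by omega), List.getElem?_eq_none_iff.mpr (by omega)]
  rw [norm p, norm q, h]

lemma dataAt_congr {D : Type} (w : List (Sigma × D)) {p q : ℕ}
    (h : min p (w.length + 1) = min q (w.length + 1)) :
    dataAt w p = dataAt w q := by
  have norm : ∀ r : ℕ, dataAt w r = dataAt w (min r (w.length + 1)) := by
    intro r
    rcases le_or_gt r (w.length + 1) with hr | hr
    · rw [min_eq_left hr]
    · have h1 : min r (w.length + 1) = w.length + 1 := by omega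
      rw [h1]
      unfold dataAt
      rw [if_neg (by omega : ¬ r = 0), if_neg (by omega : ¬ w.length + 1 = 0)]
      rw [List.getElem?_eq_none_iff.mpr (by omega), List.getElem?_eq_none_iff.mpr (by omega)]
  rw [norm p, norm q, h]

/-- Equivalence of configurations after normalizing positions to `{0,…,n+1}`. -/
def Eqv (A : WeakPA Sigma k) (n : ℕ) (c d : A.Config) : Prop :=
  c.1 = d.1 ∧ c.2.1 = d.2.1 ∧
    ∀ j, c.1 ≤ j → j ≤ k → min (c.2.2 j) (n + 1) = min (d.2.2 j) (n + 1)

lemma step_unique (A : WeakPA Sigma k) (hdet : A.Deterministic ℕ)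
    (w : List (Sigma × ℕ)) {c a b : A.Config}
    (ha : A.step w c a) (hb : A.step w c b) : a = b := by
  obtain ⟨u, _, hu⟩ := hdet.2 w c ha.1 ha.2.1
  rw [hu a ha, hu b hb]

lemma iterStep_unique (A : WeakPA Sigma k) (hdet : A.Deterministic ℕ)
    (w : List (Sigma × ℕ)) :
    ∀ (m : ℕ) (x a b : A.Config),
      A.IterStep w m x a → A.IterStep w m x b → a = b := by
  intro m
  induction m with
  | zero => intro x a b ha hb; exact ha.trans hb.symm
  | succ m ih =>
    intro x a b ha hb
    obtain ⟨ca, h1, h2⟩ := ha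
    obtain ⟨cb, h3, h4⟩ := hb
    cases step_unique A hdet w h1 h3
    exact ih ca a b h2 h4

lemma iterStep_split (A : WeakPA Sigma k) (w : List (Sigma × ℕ)) :
    ∀ (a b : ℕ) (x z : A.Config), A.IterStep w (a + b) x z →
      ∃ y, A.IterStep w a x y ∧ A.IterStep w b y z := by
  intro a
  induction a with
  | zero =>
    intro b x z h
    rw [Nat.zero_add] at h
    exact ⟨x, rfl, h⟩
  | succ a ih =>
    intro b x z h
    have h' : A.IterStep w ((a + b) + 1) x z := by
      have : a + 1 + b = (a + b) + 1 := by omega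
      rwa [this] at h
    obtain ⟨c'', hs, hrest⟩ := h'
    obtain ⟨y, hy1, hy2⟩ := ih b c'' z hrest
    exact ⟨y, ⟨c'', hs, hy1⟩, hy2⟩

lemma iterStep_snoc (A : WeakPA Sigma k) (w : List (Sigma × ℕ))
    {m : ℕ} {x z : A.Config} (h : A.IterStep w (m + 1) x z) :
    ∃ y, A.IterStep w m x y ∧ A.step w y z := by
  obtain ⟨y, hy1, hy2⟩ := iterStep_split A w m 1 x z h
  obtain ⟨c'', hs, he⟩ := hy2
  have : z = c'' := he
  exact ⟨y, hy1, this ▸ hs⟩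

/-- One-step simulation: equivalent configurations step to equivalent configurations. -/
lemma sim_step (A : WeakPA Sigma k) (w : List (Sigma × ℕ)) {c d c' : A.Config}
    (hcd : Eqv A w.length c d) (hc : A.step w c c') :
    ∃ d', A.step w d d' ∧ Eqv A w.length c' d' := by
  obtain ⟨hd1, hdq, hdθ⟩ := hcd
  obtain ⟨h1, h2, h3, act, hδ, hact⟩ := hc
  have hlab : labelAt w (d.2.2 c.1) = labelAt w (c.2.2 c.1) :=
    labelAt_congr w (hdθ c.1 le_rfl h2).symm
  have hdata : ∀ j, c.1 ≤ j → j ≤ k → dataAt w (d.2.2 j) = dataAt w (c.2.2 j) :=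
    fun j hj1 hj2 => dataAt_congr w (hdθ j hj1 hj2).symm
  have hset : eqSet w k c.1 d.2.2 = eqSet w k c.1 c.2.2 := by
    ext l
    simp only [WeakPA.eqSet, Set.mem_setOf_eq]
    constructor
    · rintro ⟨hl1, hl2, hl3, hl4⟩
      rw [hdata l hl1.le hl2, hdata c.1 le_rfl h2] at *
      exact ⟨hl1, hl2, hl3, hl4⟩
    · rintro ⟨hl1, hl2, hl3, hl4⟩
      rw [hdata l hl1.le hl2, hdata c.1 le_rfl h2]
      exact ⟨hl1, hl2, hl3, hl4⟩
  have hδd : A.δ d.1 (labelAt w (d.2.2 d.1)) (eqSet w k d.1 d.2.2) d.2.1 c'.2.1 act := by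
    rw [← hd1, hlab, hset, ← hdq]
    exact hδ
  cases act with
  | stay =>
    obtain ⟨ha1, ha2, ha3⟩ := hact
    refine ⟨(d.1, c'.2.1, d.2.2), ⟨by omega, by omega, fun j _ _ => rfl,
      PAct.stay, hδd, rfl, rfl, rfl⟩, ?_, rfl, ?_⟩
    · rw [ha1, hd1]
    · intro j hj1 hj2
      rw [ha1] at hj1
      by_cases hjc : j = c.1
      · subst hjc; rw [ha2]; exact hdθ c.1 le_rfl h2
      · rw [h3 j hjc (by omega)]; exact hdθ j (by omega) hj2
  | right =>
    obtain ⟨ha1, ha2, ha3⟩ := hact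
    refine ⟨(d.1, c'.2.1, fun j => if j = c.1 then d.2.2 c.1 + 1 else d.2.2 j),
      ⟨by omega, by omega, fun j hj hj' => by simp only []; rw [if_neg (by omega : ¬ j = c.1)],
      PAct.right, hδd, rfl, ?_, ?_⟩, ?_, rfl, ?_⟩
    · simp only []
      rw [if_pos hd1.symm, hd1]
    · simp only []
      rw [if_neg (by omega : ¬ d.1 - 1 = c.1)]
    · rw [ha1, hd1]
    · intro j hj1 hj2
      rw [ha1] at hj1
      by_cases hjc : j = c.1
      · subst hjc
        simp only []
        rw [if_true]
        rw [ha2]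
        have := hdθ c.1 le_rfl h2
        omega
      · simp only [if_neg hjc]
        rw [h3 j hjc (by omega)]; exact hdθ j (by omega) hj2
  | lift =>
    obtain ⟨ha1, ha2, ha3⟩ := hact
    refine ⟨(d.1 + 1, c'.2.1, d.2.2), ⟨by omega, by omega, fun j _ _ => rfl,
      PAct.lift, hδd, rfl, rfl, rfl⟩, ?_, rfl, ?_⟩
    · rw [ha1, hd1]
    · intro j hj1 hj2
      rw [ha1] at hj1
      rw [h3 j (by omega) (by omega)]; exact hdθ j (by omega) hj2
  | place =>
    obtain ⟨ha0, ha1, ha2, ha3⟩ := hact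
    refine ⟨(d.1 - 1, c'.2.1, fun j => if j = c.1 - 1 then d.2.2 c.1 else d.2.2 j),
      ⟨by omega, by omega, fun j hj hj' => by simp only []; rw [if_neg (by omega : ¬ j = c.1 - 1)],
      PAct.place, hδd, by omega, rfl, ?_, ?_⟩, ?_, rfl, ?_⟩
    · simp only []
      rw [if_neg (by omega : ¬ d.1 = c.1 - 1)]
    · simp only []
      rw [if_pos (by omega : d.1 - 1 = c.1 - 1), hd1]
    · rw [ha1, hd1]
    · intro j hj1 hj2
      rw [ha1] at hj1
      by_cases hjc : j = c.1 - 1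
      · subst hjc
        simp only []
        rw [if_true]
        rw [ha3]
        exact hdθ c.1 le_rfl h2
      · by_cases hjc' : j = c.1
        · subst hjc'
          simp only [if_neg hjc]
          rw [ha2]
          exact hdθ c.1 le_rfl h2
        · simp only [if_neg hjc]
          rw [h3 j hjc' hjc]
          exact hdθ j (by omega) hj2

end Det18

/-- The membership problem for a fixed deterministic top view weak
`k`-pebble automaton is solvable in time `O(n^k)` on data words of length `n`:
there is a constant `C` such that membership of a word `w` is equivalent to the
(unique, deterministic) run reaching a final state within `C·(n+2)^k` steps. -/
theorem deterministic_topView_membership_time_O_n_pow_k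
    (Sigma : Type) (k : ℕ) (hk : 1 ≤ k) (A : WeakPA Sigma k)
    (htop : A.TopView) (hdet : A.Deterministic ℕ) :
    ∃ C : ℕ, ∀ w : List (Sigma × ℕ),
      w ∈ A.Lang ℕ ↔
        ∃ m ≤ C * (w.length + 2) ^ k, ∃ c : A.Config,
          A.IterStep w m A.initConfig c ∧ c.2.1 ∈ A.F := by
  classical
  haveI : Fintype A.Q := A.finQ
  refine ⟨(k + 1) * Fintype.card A.Q, fun w => ?_⟩
  constructor
  · intro hw
    -- extract a finite accepting run
    have hex : ∃ m, ∃ c : A.Config, A.IterStep w m A.initConfig c ∧ c.2.1 ∈ A.F := by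
      have main : ∀ c0 : A.Config, A.Leads w c0 →
          ∃ m, ∃ c, A.IterStep w m c0 c ∧ c.2.1 ∈ A.F := by
        intro c0 h
        induction h with
        | final hF => exact ⟨0, _, rfl, hF⟩
        | univ hU _ _ => rw [hdet.1] at hU; exact absurd hU (Set.notMem_empty _)
        | exist hF hU hstep hlead ih =>
          obtain ⟨m, cf, hiter, hfin⟩ := ih
          exact ⟨m + 1, cf, ⟨_, hstep, hiter⟩, hfin⟩
      exact main _ hw
    set P : ℕ → Prop := fun m => ∃ c : A.Config, A.IterStep w m A.initConfig c ∧ c.2.1 ∈ A.F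
      with hPdef
    have hP : ∃ m, P m := hex
    set m₀ := Nat.find hP with hm₀def
    obtain ⟨cF, hIterF, hFin⟩ := Nat.find_spec hP
    have hsplitall : ∀ j, ∃ cj, j ≤ m₀ →
        A.IterStep w j A.initConfig cj ∧ A.IterStep w (m₀ - j) cj cF := by
      intro j
      by_cases hj : j ≤ m₀
      · have h' : A.IterStep w (j + (m₀ - j)) A.initConfig cF := by
          rwa [Nat.add_sub_cancel' hj]
        obtain ⟨y, hy1, hy2⟩ := Det18.iterStep_split A w j (m₀ - j) _ _ h'
        exact ⟨y, fun _ => ⟨hy1, hy2⟩⟩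
      · exact ⟨cF, fun h => absurd h hj⟩
    choose cc hcc using hsplitall
    have hcc1 : ∀ j, j ≤ m₀ → A.IterStep w j A.initConfig (cc j) :=
      fun j hj => (hcc j hj).1
    have hccF : cc m₀ = cF :=
      Det18.iterStep_unique A hdet w m₀ _ _ _ (hcc1 m₀ le_rfl) hIterF
    have hnotfin : ∀ j, j < m₀ → (cc j).2.1 ∉ A.F := by
      intro j hj hf
      exact Nat.find_min hP hj ⟨cc j, hcc1 j hj.le, hf⟩
    have hstepc : ∀ j, j + 1 ≤ m₀ → A.step w (cc j) (cc (j + 1)) := by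
      intro j hj
      obtain ⟨y, hy1, hy2⟩ := Det18.iterStep_snoc A w (hcc1 (j + 1) hj)
      have hy : y = cc j := Det18.iterStep_unique A hdet w j _ _ _ hy1 (hcc1 j (by omega))
      rwa [hy] at hy2
    have hhead : ∀ j, j < m₀ → 1 ≤ (cc j).1 ∧ (cc j).1 ≤ k := by
      intro j hj
      exact ⟨(hstepc j hj).1, (hstepc j hj).2.1⟩
    -- the key repetition argument
    have key : ∀ p q : ℕ, p < q → q < m₀ → Det18.Eqv A w.length (cc p) (cc q) → False := by
      intro p q hpq hq heqv
      have prop : ∀ t, q + t ≤ m₀ → Det18.Eqv A w.length (cc (p + t)) (cc (q + t)) := by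
        intro t
        induction t with
        | zero => intro _; simpa using heqv
        | succ t ih =>
          intro ht
          have h1 := hstepc (p + t) (by omega)
          have h2 := hstepc (q + t) (by omega)
          obtain ⟨d', hd', he⟩ := Det18.sim_step A w (ih (by omega)) h1
          have hd'' : d' = cc (q + t + 1) := Det18.step_unique A hdet w hd' h2
          rw [hd''] at he
          have e1 : p + (t + 1) = p + t + 1 := by omega
          have e2 : q + (t + 1) = q + t + 1 := by omega
          rw [e1, e2]
          exact he
      have hfin2 := prop (m₀ - q) (by omega)
      have hqm : q + (m₀ - q) = m₀ := by omega
      rw [hqm, hccF] at hfin2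
      refine hnotfin (p + (m₀ - q)) (by omega) ?_
      rw [hfin2.2.1]
      exact hFin
    -- the bound via pigeonhole
    set N := (k + 1) * Fintype.card A.Q * (w.length + 2) ^ k with hNdef
    have hm0N : m₀ ≤ N := by
      by_contra hlt
      push_neg at hlt
      set f : Fin (N + 1) → Fin (k + 1) × A.Q × (Fin k → Fin (w.length + 2)) := fun j =>
        (⟨(cc (j : ℕ)).1, by
            have hj := j.isLt
            have := (hhead (j : ℕ) (by omega)).2
            omega⟩,
         (cc (j : ℕ)).2.1,
         fun l => ⟨min ((cc (j : ℕ)).2.2 ((l : ℕ) + 1)) (w.length + 1), by omega⟩)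
        with hfdef
      have hcard : Fintype.card (Fin (k + 1) × A.Q × (Fin k → Fin (w.length + 2)))
          < Fintype.card (Fin (N + 1)) := by
        simp only [Fintype.card_prod, Fintype.card_fun, Fintype.card_fin]
        rw [hNdef]
        rw [mul_assoc]
        omega
      obtain ⟨a, b, hab, hfab⟩ := Fintype.exists_ne_map_eq_of_card_lt f hcard
      have hEqv : ∀ a b : Fin (N + 1), f a = f b →
          Det18.Eqv A w.length (cc (a : ℕ)) (cc (b : ℕ)) := by
        intro a b hfab
        have e1 : (cc (a : ℕ)).1 = (cc (b : ℕ)).1 :=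
          congrArg Fin.val (congrArg Prod.fst hfab)
        have e2 : (cc (a : ℕ)).2.1 = (cc (b : ℕ)).2.1 :=
          congrArg (fun x => x.2.1) hfab
        have e3 := congrArg (fun x => x.2.2) hfab
        refine ⟨e1, e2, fun j hj1 hj2 => ?_⟩
        have hja := j.le_refl
        have ha1 : 1 ≤ (cc (a : ℕ)).1 := by
          have hj := a.isLt
          exact (hhead (a : ℕ) (by omega)).1
        have hjpos : 1 ≤ j := le_trans ha1 hj1
        have hlk : j - 1 < k := by omega
        have := congrArg Fin.val (congrFun e3 ⟨j - 1, hlk⟩)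
        simp only [hfdef] at this
        have hj1' : j - 1 + 1 = j := by omega
        rwa [hj1'] at this
      rcases hab.lt_or_gt with hlt' | hlt'
      · exact key (a : ℕ) (b : ℕ) hlt' (by have := b.isLt; omega) (hEqv a b hfab)
      · exact key (b : ℕ) (a : ℕ) hlt' (by have := a.isLt; omega) (hEqv b a hfab.symm)
    refine ⟨m₀, ?_, cF, hIterF, hFin⟩
    calc m₀ ≤ N := hm0N
      _ = (k + 1) * Fintype.card A.Q * (w.length + 2) ^ k := hNdef
  · rintro ⟨m, _, c, hiter, hfin⟩
    have H : ∀ (m : ℕ) (c0 cend : A.Config),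
        A.IterStep w m c0 cend → cend.2.1 ∈ A.F → A.Leads w c0 := by
      intro m
      induction m with
      | zero =>
        intro c0 cend h hf
        have : cend = c0 := h
        subst this
        exact WeakPA.Leads.final hf
      | succ m ih =>
        intro c0 cend h hf
        obtain ⟨c'', hstep, hiter'⟩ := h
        by_cases hc0 : c0.2.1 ∈ A.F
        · exact WeakPA.Leads.final hc0
        · refine WeakPA.Leads.exist hc0 ?_ hstep (ih _ _ hiter' hf)
          rw [hdet.1]
          exact Set.notMem_empty _
    exact H m _ c hiter hfin
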